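/- Let S = (IO∞(ℤ))ⁿ, I ⊂ {1,…,n} proper, and let ρ be the kernel congruence of the homomorphism π^I. Then ρ_min, defined by a ρ_min b iff there is an idempotent e with ae = be and e ρ a⁻¹a ρ b⁻¹b, equals the composite congruence σ_[i₁]∘…∘σ_[i_k] where {i₁,…,i_k} = {1,…,n} \ I. -/

import Mathlib

/-- A partial injective self-map of ℤ (encoded as a `PEquiv`) is monotone. -/
def PMono (f : ℤ ≃. ℤ) : Prop :=
  ∀ x y a b : ℤ, a ∈ f x → b ∈ f y → x ≤ y → a ≤ b

/-- Domain of a partial injective self-map of ℤ. -/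
def PDom (f : ℤ ≃. ℤ) : Set ℤ := {x | (f x).isSome}

/-- Range of a partial injective self-map of ℤ. -/
def PRan (f : ℤ ≃. ℤ) : Set ℤ := {y | (f.symm y).isSome}

/-- Membership in IO∞(ℤ): injective (built into `PEquiv`), monotone,
with cofinite domain and cofinite range. -/
def IOZ (f : ℤ ≃. ℤ) : Prop :=
  PMono f ∧ (PDom f)ᶜ.Finite ∧ (PRan f)ᶜ.Finite

/-- Idempotent element of IO∞(ℤ). -/
def IsIdem (ε : ℤ ≃. ℤ) : Prop := ε.trans ε = ε

/-- Membership in the direct power (IO∞(ℤ))ⁿ. -/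
def IOZn (n : ℕ) (α : Fin n → ℤ ≃. ℤ) : Prop := ∀ i, IOZ (α i)

/-- Coordinatewise composition on the direct power (α then β, as in the paper). -/
def mulN {n : ℕ} (α β : Fin n → ℤ ≃. ℤ) : Fin n → ℤ ≃. ℤ := fun i => (α i).trans (β i)

/-- The identity 𝕀 of (IO∞(ℤ))ⁿ. -/
def oneN (n : ℕ) : Fin n → ℤ ≃. ℤ := fun _ => PEquiv.refl ℤ

/-- εᵢ°: the tuple with ε in coordinate i and identities elsewhere. -/
def epsT {n : ℕ} (i : Fin n) (ε : ℤ ≃. ℤ) : Fin n → ℤ ≃. ℤ :=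
  fun j => if j = i then ε else PEquiv.refl ℤ

/-- A congruence on the semigroup (IO∞(ℤ))ⁿ (relative to the carrier `IOZn n`). -/
def IsCongOn (n : ℕ) (ρ : (Fin n → ℤ ≃. ℤ) → (Fin n → ℤ ≃. ℤ) → Prop) : Prop :=
  (∀ α, IOZn n α → ρ α α) ∧
  (∀ α β, IOZn n α → IOZn n β → ρ α β → ρ β α) ∧
  (∀ α β γ, IOZn n α → IOZn n β → IOZn n γ → ρ α β → ρ β γ → ρ α γ) ∧
  (∀ α β γ, IOZn n α → IOZn n β → IOZn n γ → ρ α β →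
    ρ (mulN α γ) (mulN β γ) ∧ ρ (mulN γ α) (mulN γ β))

/-- The congruence σ_[i]. -/
def sigmaI (n : ℕ) (i : Fin n) (α β : Fin n → ℤ ≃. ℤ) : Prop :=
  ∃ ε : ℤ ≃. ℤ, IOZ ε ∧ IsIdem ε ∧ mulN α (epsT i ε) = mulN β (epsT i ε)

/-- D(α,β): the set of coordinates where α and β differ. -/
def Dset {n : ℕ} (α β : Fin n → ℤ ≃. ℤ) : Set (Fin n) := {i | α i ≠ β i}

/-- Idempotent tuple. -/
def IsIdemN {n : ℕ} (ε : Fin n → ℤ ≃. ℤ) : Prop := ∀ i, (ε i).trans (ε i) = ε i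

/-- σ_[i₁,…,i_k] for the set of indices t: α and β agree after right multiplication
by a product ε°_{i₁}⋯ε°_{i_k} of idempotents supported on t. -/
def sigmaSet (n : ℕ) (t : Finset (Fin n)) (α β : Fin n → ℤ ≃. ℤ) : Prop :=
  ∃ ε : Fin n → ℤ ≃. ℤ, IOZn n ε ∧ IsIdemN ε ∧ (∀ i ∉ t, ε i = PEquiv.refl ℤ) ∧
    mulN α ε = mulN β ε

/-- The map π^I keeping coordinates in I and replacing the others by the identity. -/
def piI (n : ℕ) (I : Finset (Fin n)) (α : Fin n → ℤ ≃. ℤ) : Fin n → ℤ ≃. ℤ :=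
  fun i => if i ∈ I then α i else PEquiv.refl ℤ

/-- Coordinatewise inversion in (IO∞(ℤ))ⁿ. -/
def invN {n : ℕ} (α : Fin n → ℤ ≃. ℤ) : Fin n → ℤ ≃. ℤ := fun i => (α i).symm

lemma trans_symm_trans_self (f : ℤ ≃. ℤ) : f.trans (f.symm.trans f) = f := by
  ext x b
  rw [← Option.mem_def, ← Option.mem_def]
  simp only [PEquiv.mem_trans, PEquiv.symm_symm]
  constructor
  · rintro ⟨c, hc, d, hd, hb⟩
    rw [Option.mem_def] at hc hd
    have h1 := (PEquiv.eq_some_iff f).mpr hc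
    rw [h1] at hd
    rwa [Option.some_inj.1 hd]
  · intro hb
    rw [Option.mem_def] at hb
    exact ⟨b, hb, x, by rw [Option.mem_def, PEquiv.eq_some_iff]; exact hb, hb⟩

lemma symm_trans_self_idem (f : ℤ ≃. ℤ) :
    (f.symm.trans f).trans (f.symm.trans f) = f.symm.trans f := by
  rw [PEquiv.trans_assoc f.symm f (f.symm.trans f), trans_symm_trans_self]

lemma refl_IOZ : IOZ (PEquiv.refl ℤ) := by
  refine ⟨?_, ?_, ?_⟩
  · intro x y a b ha hb hxy
    simp [PEquiv.refl] at ha hb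
    omega
  · convert Set.finite_empty
    ext x; simp [PDom, PEquiv.refl]
  · convert Set.finite_empty
    ext x; simp [PRan, PEquiv.refl, PEquiv.symm]

lemma symm_trans_IOZ (f : ℤ ≃. ℤ) (hf : IOZ f) : IOZ (f.symm.trans f) := by
  have key : ∀ x y : ℤ, y ∈ (f.symm.trans f) x ↔ y = x ∧ x ∈ PRan f := by
    intro x y
    rw [PEquiv.symm_trans_self, PEquiv.mem_ofSet_iff]
    constructor
    · rintro ⟨h1, h2⟩; subst h1; exact ⟨rfl, h2⟩
    · rintro ⟨h1, h2⟩; subst h1; exact ⟨rfl, h2⟩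
  have hdom : PDom (f.symm.trans f) = PRan f := by
    ext x
    simp only [PDom, Set.mem_setOf_eq, Option.isSome_iff_exists]
    constructor
    · rintro ⟨a, ha⟩; exact ((key x a).1 ha).2
    · intro h; exact ⟨x, (key x x).2 ⟨rfl, h⟩⟩
  have hsymm : (f.symm.trans f).symm = f.symm.trans f := by
    rw [PEquiv.symm_trans_rev, PEquiv.symm_symm]
  refine ⟨?_, ?_, ?_⟩
  · intro x y a b ha hb hxy
    rw [key] at ha hb
    rw [ha.1, hb.1]; exact hxy
  · rw [hdom]; exact hf.2.2
  · have : PRan (f.symm.trans f) = PRan f := by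
      rw [PRan, hsymm]; exact hdom
    rw [this]; exact hf.2.2

/-- for the kernel congruence ρ of π^I (a ρ b iff π^I a = π^I b),
the congruence ρ_min equals σ_[i₁]∘…∘σ_[i_k] where {i₁,…,i_k} = {1,…,n} \ I. -/
theorem stmt19 (n : ℕ) (I : Finset (Fin n)) (hI : I ≠ Finset.univ)
    (α β : Fin n → ℤ ≃. ℤ) (hα : IOZn n α) (hβ : IOZn n β) :
    (∃ ε : Fin n → ℤ ≃. ℤ, IOZn n ε ∧ IsIdemN ε ∧ mulN α ε = mulN β ε ∧
        piI n I ε = piI n I (mulN (invN α) α) ∧ piI n I ε = piI n I (mulN (invN β) β)) ↔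
      sigmaSet n Iᶜ α β := by
  constructor
  · rintro ⟨ε, hεIOZ, hεid, hmul, hpa, hpb⟩
    have hεIa : ∀ i ∈ I, ε i = (α i).symm.trans (α i) := by
      intro i hi
      have h := congrFun hpa i
      simpa [piI, hi, mulN, invN] using h
    have hεIb : ∀ i ∈ I, ε i = (β i).symm.trans (β i) := by
      intro i hi
      have h := congrFun hpb i
      simpa [piI, hi, mulN, invN] using h
    have hab : ∀ i ∈ I, α i = β i := by
      intro i hi
      have h := congrFun hmul i
      simp only [mulN] at h
      calc α i = (α i).trans (ε i) := by rw [hεIa i hi, trans_symm_trans_self]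
        _ = (β i).trans (ε i) := h
        _ = β i := by rw [hεIb i hi, trans_symm_trans_self]
    refine ⟨fun i => if i ∈ I then PEquiv.refl ℤ else ε i, ?_, ?_, ?_, ?_⟩
    · intro i
      by_cases hi : i ∈ I
      · simpa [hi] using refl_IOZ
      · simpa [hi] using hεIOZ i
    · intro i
      by_cases hi : i ∈ I
      · simp [hi, PEquiv.trans_refl]
      · simpa [hi] using hεid i
    · intro i hi
      simp only [Finset.mem_compl, not_not] at hi
      simp [hi]
    · funext i
      by_cases hi : i ∈ I
      · simp [mulN, hi, PEquiv.trans_refl, hab i hi]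
      · have h := congrFun hmul i
        simp only [mulN] at h
        simpa [mulN, hi] using h
  · rintro ⟨ε, hεIOZ, hεid, hsupp, hmul⟩
    have hsI : ∀ i ∈ I, ε i = PEquiv.refl ℤ := by
      intro i hi
      exact hsupp i (by simp [hi])
    have hab : ∀ i ∈ I, α i = β i := by
      intro i hi
      have h := congrFun hmul i
      simpa [mulN, hsI i hi, PEquiv.trans_refl] using h
    refine ⟨fun i => if i ∈ I then (α i).symm.trans (α i) else ε i, ?_, ?_, ?_, ?_, ?_⟩
    · intro i
      by_cases hi : i ∈ I
      · simpa [hi] using symm_trans_IOZ _ (hα i)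
      · simpa [hi] using hεIOZ i
    · intro i
      by_cases hi : i ∈ I
      · simpa [hi] using symm_trans_self_idem (α i)
      · simpa [hi] using hεid i
    · funext i
      by_cases hi : i ∈ I
      · simp only [mulN, hi, if_pos]
        rw [trans_symm_trans_self, ← hab i hi, trans_symm_trans_self]
      · have h := congrFun hmul i
        simp only [mulN] at h
        simpa [mulN, hi] using h
    · funext i
      by_cases hi : i ∈ I
      · simp [piI, hi, mulN, invN]
      · simp [piI, hi]
    · funext i
      by_cases hi : i ∈ I
      · simp only [piI, hi, if_pos, mulN, invN]
        rw [hab i hi]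
      · simp [piI, hi]
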